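/- Let Γ be a temporal theory over alphabet 𝒜 and let ⟨H,T⟩ be a THT_f model of Γ of length λ. Define the HT-trace ⟨H',T'⟩ over the extended alphabet 𝒜⁺ by H'_k = H_k ∪ { L_μ | μ ∈ subf(Γ), m[k,μ] = 2 } and T'_k = T_k ∪ { L_μ | μ ∈ subf(Γ), m[k,μ] ≠ 0 }, where m is the valuation associated with ⟨H,T⟩. Then ⟨H',T'⟩ restricted to 𝒜 equals ⟨H,T⟩, the valuation m' of ⟨H',T'⟩ satisfies m'[k,L_μ] = m[k,μ] for all μ ∈ subf(Γ) and 0 ≤ k < λ, and ⟨H',T'⟩ ⊨ σ(Γ). -/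

import Mathlib

/-- Syntax of temporal formulas over an alphabet of atoms `α`:
`⊥`, atoms, `∧`, `∨`, `→`, previous `●`, since `S`, trigger `T`,
next `○`, until `U`, release `R`. -/
inductive TForm (α : Type) : Type
  | bot   : TForm α
  | atom  : α → TForm α
  | conj  : TForm α → TForm α → TForm α
  | disj  : TForm α → TForm α → TForm α
  | impl  : TForm α → TForm α → TForm α
  | prev  : TForm α → TForm α
  | since : TForm α → TForm α → TForm α
  | trig  : TForm α → TForm α → TForm α
  | next  : TForm α → TForm α
  | untl  : TForm α → TForm α → TForm α
  | rels  : TForm α → TForm α → TForm α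

/-- THT_f satisfaction `⟨H,T⟩,k ⊨ φ` for finite traces of length `n`
(time points are `0 ≤ k < n`). -/
def sat {α : Type} (n : ℕ) : (ℕ → Set α) → (ℕ → Set α) → ℕ → TForm α → Prop
  | _, _, _, .bot => False
  | H, _, k, .atom a => a ∈ H k
  | H, T, k, .conj φ ψ => sat n H T k φ ∧ sat n H T k ψ
  | H, T, k, .disj φ ψ => sat n H T k φ ∨ sat n H T k ψ
  | H, T, k, .impl φ ψ =>
      (sat n H T k φ → sat n H T k ψ) ∧ (sat n T T k φ → sat n T T k ψ)
  | H, T, k, .prev φ => 0 < k ∧ sat n H T (k - 1) φ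
  | H, T, k, .since φ ψ =>
      ∃ j, j ≤ k ∧ sat n H T j ψ ∧ ∀ i, j < i → i ≤ k → sat n H T i φ
  | H, T, k, .trig φ ψ =>
      ∀ j, j ≤ k → sat n H T j ψ ∨ ∃ i, j < i ∧ i ≤ k ∧ sat n H T i φ
  | H, T, k, .next φ => k + 1 < n ∧ sat n H T (k + 1) φ
  | H, T, k, .untl φ ψ =>
      ∃ j, k ≤ j ∧ j < n ∧ sat n H T j ψ ∧ ∀ i, k ≤ i → i < j → sat n H T i φ
  | H, T, k, .rels φ ψ =>
      ∀ j, k ≤ j → j < n → sat n H T j ψ ∨ ∃ i, k ≤ i ∧ i < j ∧ sat n H T i φ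

open Classical in
/-- The three-valued valuation `m[k,φ] ∈ {0,1,2}` associated with an HT-trace
`⟨H,T⟩` of length `n` (an empty `Finset.inf` is `⊤ = 2`, an empty `Finset.sup` is `⊥ = 0`). -/
noncomputable def val {α : Type} (H T : ℕ → Set α) (n : ℕ) : ℕ → TForm α → Fin 3
  | _, .bot => 0
  | k, .atom a => if a ∈ H k then 2 else if a ∈ T k then 1 else 0
  | k, .conj φ ψ => min (val H T n k φ) (val H T n k ψ)
  | k, .disj φ ψ => max (val H T n k φ) (val H T n k ψ)
  | k, .impl φ ψ => if val H T n k φ ≤ val H T n k ψ then 2 else val H T n k ψ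
  | k, .prev φ => if k = 0 then 0 else val H T n (k - 1) φ
  | k, .since φ ψ =>
      (Finset.range (k + 1)).sup fun j =>
        min (val H T n j ψ) ((Finset.Ioc j k).inf fun i => val H T n i φ)
  | k, .trig φ ψ =>
      (Finset.range (k + 1)).inf fun j =>
        max (val H T n j ψ) ((Finset.Ioc j k).sup fun i => val H T n i φ)
  | k, .next φ => if k + 1 = n then 0 else val H T n (k + 1) φ
  | k, .untl φ ψ =>
      (Finset.Ico k n).sup fun j =>
        min (val H T n j ψ) ((Finset.Ico k j).inf fun i => val H T n i φ)
  | k, .rels φ ψ =>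
      (Finset.Ico k n).inf fun j =>
        max (val H T n j ψ) ((Finset.Ico k j).sup fun i => val H T n i φ)

/-- Renaming of atoms in a formula. -/
def TForm.map {α β : Type} (f : α → β) : TForm α → TForm β
  | .bot => .bot
  | .atom a => .atom (f a)
  | .conj φ ψ => .conj (φ.map f) (ψ.map f)
  | .disj φ ψ => .disj (φ.map f) (ψ.map f)
  | .impl φ ψ => .impl (φ.map f) (ψ.map f)
  | .prev φ => .prev (φ.map f)
  | .since φ ψ => .since (φ.map f) (ψ.map f)
  | .trig φ ψ => .trig (φ.map f) (ψ.map f)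
  | .next φ => .next (φ.map f)
  | .untl φ ψ => .untl (φ.map f) (ψ.map f)
  | .rels φ ψ => .rels (φ.map f) (ψ.map f)

/-- The set of subformulas of a formula (including the formula itself). -/
def subf {α : Type} : TForm α → Set (TForm α)
  | .bot => {.bot}
  | .atom a => {.atom a}
  | .conj φ ψ => insert (.conj φ ψ) (subf φ ∪ subf ψ)
  | .disj φ ψ => insert (.disj φ ψ) (subf φ ∪ subf ψ)
  | .impl φ ψ => insert (.impl φ ψ) (subf φ ∪ subf ψ)
  | .prev φ => insert (.prev φ) (subf φ)
  | .since φ ψ => insert (.since φ ψ) (subf φ ∪ subf ψ)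
  | .trig φ ψ => insert (.trig φ ψ) (subf φ ∪ subf ψ)
  | .next φ => insert (.next φ) (subf φ)
  | .untl φ ψ => insert (.untl φ ψ) (subf φ ∪ subf ψ)
  | .rels φ ψ => insert (.rels φ ψ) (subf φ ∪ subf ψ)

/-- The set of subformulas of the formulas of a theory `Γ`. -/
def subfTh {α : Type} (Γ : Set (TForm α)) : Set (TForm α) := ⋃ φ ∈ Γ, subf φ

/-- The extended alphabet `𝒜⁺`: original atoms (`Sum.inl`) plus a fresh
labelling atom `L_μ` (`Sum.inr μ`) for every formula `μ` over `𝒜`. -/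
abbrev ExtAlph (α : Type) := α ⊕ TForm α

/-- The label `L_μ` of a formula `μ`, as a formula over the extended alphabet:
`L_⊥ = ⊥`, `L_a = a` for atoms `a`, and a fresh atom `Sum.inr μ` otherwise. -/
def lab {α : Type} : TForm α → TForm (ExtAlph α)
  | .bot => .bot
  | .atom a => .atom (Sum.inl a)
  | μ => .atom (Sum.inr μ)

/-- Negation `¬φ := φ → ⊥`. -/
def tneg {β : Type} (φ : TForm β) : TForm β := .impl φ .bot

/-- Truth `⊤ := ¬⊥`. -/
def ttop {β : Type} : TForm β := tneg .bot

/-- Double implication `φ ↔ ψ`. -/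
def tiff {β : Type} (φ ψ : TForm β) : TForm β := .conj (.impl φ ψ) (.impl ψ φ)

/-- Always `□φ := ⊥ R φ`. -/
def talways {β : Type} (φ : TForm β) : TForm β := .rels .bot φ

/-- Weak next `○̂φ := ¬○⊤ ∨ ○φ`. -/
def twnext {β : Type} (φ : TForm β) : TForm β := .disj (tneg (.next ttop)) (.next φ)

/-- The definition `η(μ)` of the label `L_μ` of a formula `μ`. -/
def eta {α : Type} : TForm α → Set (TForm (ExtAlph α))
  | .bot => ∅
  | .atom _ => ∅
  | .conj φ ψ =>
      {talways (tiff (lab (.conj φ ψ)) (.conj (lab φ) (lab ψ)))}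
  | .disj φ ψ =>
      {talways (tiff (lab (.disj φ ψ)) (.disj (lab φ) (lab ψ)))}
  | .impl φ ψ =>
      {talways (tiff (lab (.impl φ ψ)) (.impl (lab φ) (lab ψ)))}
  | .prev φ =>
      {twnext (talways (tiff (lab (.prev φ)) (.prev (lab φ)))),
       tneg (lab (.prev φ))}
  | .since φ ψ =>
      {twnext (talways (tiff (lab (.since φ ψ))
          (.disj (lab ψ) (.conj (lab φ) (.prev (lab (.since φ ψ))))))),
       tiff (lab (.since φ ψ)) (lab ψ)}
  | .trig φ ψ =>
      {twnext (talways (tiff (lab (.trig φ ψ))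
          (.conj (lab ψ) (.disj (lab φ) (.prev (lab (.trig φ ψ))))))),
       tiff (lab (.trig φ ψ)) (lab ψ)}
  | .next φ =>
      {twnext (talways (tiff (.prev (lab (.next φ))) (lab φ))),
       talways (.impl (tneg (.next ttop)) (tneg (lab (.next φ))))}
  | .untl φ ψ =>
      {twnext (talways (tiff (.prev (lab (.untl φ ψ)))
          (.disj (.prev (lab ψ)) (.conj (.prev (lab φ)) (lab (.untl φ ψ)))))),
       talways (.impl (tneg (.next ttop)) (tiff (lab (.untl φ ψ)) (lab ψ)))}
  | .rels φ ψ =>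
      {twnext (talways (tiff (.prev (lab (.rels φ ψ)))
          (.conj (.prev (lab ψ)) (.disj (.prev (lab φ)) (lab (.rels φ ψ)))))),
       talways (.impl (tneg (.next ttop)) (tiff (lab (.rels φ ψ)) (lab ψ)))}

/-- The translation `σ(Γ) = {L_φ | φ ∈ Γ} ∪ ⋃ {η(μ) | μ ∈ subf(Γ)}`. -/
def sigmaT {α : Type} (Γ : Set (TForm α)) : Set (TForm (ExtAlph α)) :=
  (lab '' Γ) ∪ ⋃ μ ∈ subfTh Γ, eta μ

/-- Restriction of a trace over the extended alphabet to the original alphabet `𝒜`. -/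
def restrict {α : Type} (X : ℕ → Set (ExtAlph α)) : ℕ → Set α :=
  fun k => {a | Sum.inl a ∈ X k}

/-! ### Auxiliary lemmas -/

section Fin3Facts

private lemma fin3_dec : ∀ x : Fin 3, x = 0 ∨ x = 1 ∨ x = 2 := by decide
private lemma fin3_top : ∀ x : Fin 3, x ≤ 2 := by decide
private lemma fin3_bot : ∀ x : Fin 3, (0:Fin 3) ≤ x := by decide
private lemma fin3_ne2_le : ∀ x : Fin 3, x ≠ 2 → x ≤ 1 := by decide
private lemma fin3_ne0_le : ∀ x : Fin 3, x ≠ 0 → 1 ≤ x := by decide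
private lemma fin3_min2 : ∀ a b : Fin 3, min a b = 2 ↔ a = 2 ∧ b = 2 := by decide
private lemma fin3_max2 : ∀ a b : Fin 3, max a b = 2 ↔ a = 2 ∨ b = 2 := by decide
private lemma fin3_min0 : ∀ a b : Fin 3, min a b = 0 ↔ a = 0 ∨ b = 0 := by decide
private lemma fin3_max0 : ∀ a b : Fin 3, max a b = 0 ↔ a = 0 ∧ b = 0 := by decide
private lemma fin3_min_top : ∀ a : Fin 3, min a ⊤ = a := by decide
private lemma fin3_max_bot : ∀ a : Fin 3, max a ⊥ = a := by decide
private lemma fin3_nle0 : ∀ a b : Fin 3, (¬ a ≤ b ∧ b = 0) ↔ (¬ a = 0 ∧ b = 0) := by decide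
private lemma fin3_implB : ∀ a b : Fin 3,
    ((a = 2 → b = 2) ∧ (¬ a = 0 → ¬ b = 0)) ↔ (a ≤ b ∨ b = 2) := by decide
private lemma fin3_or2 : ∀ a b : Fin 3, (a ≤ b ∨ b = 2) ↔ a ≤ b := by decide
private lemma fin3_le0 : ∀ a : Fin 3, a ≤ 0 ↔ a = 0 := by decide

private lemma ite_val2 {c : Prop} [Decidable c] (b : Fin 3) :
    (if c then (2:Fin 3) else b) = 2 ↔ (c ∨ b = 2) := by
  split_ifs with h <;> simp [h]

private lemma ite_val0 {c : Prop} [Decidable c] (b : Fin 3) :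
    (if c then (2:Fin 3) else b) = 0 ↔ (¬ c ∧ b = 0) := by
  split_ifs with h <;> simp [h] <;> decide

private lemma sup_eq_two {β : Type} (s : Finset β) (f : β → Fin 3) :
    s.sup f = 2 ↔ ∃ a ∈ s, f a = 2 := by
  constructor
  · intro h
    by_contra hc
    push_neg at hc
    have h1 : s.sup f ≤ 1 := Finset.sup_le fun a ha => fin3_ne2_le _ (hc a ha)
    rw [h] at h1
    exact absurd h1 (by decide)
  · rintro ⟨a, ha, hfa⟩
    exact le_antisymm (fin3_top _) (hfa ▸ Finset.le_sup ha)

private lemma inf_eq_two {β : Type} (s : Finset β) (f : β → Fin 3) :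
    s.inf f = 2 ↔ ∀ a ∈ s, f a = 2 := by
  constructor
  · intro h a ha
    exact le_antisymm (fin3_top _) (h ▸ Finset.inf_le ha)
  · intro h
    exact le_antisymm (fin3_top _) (Finset.le_inf fun a ha => le_of_eq (h a ha).symm)

private lemma sup_eq_zero {β : Type} (s : Finset β) (f : β → Fin 3) :
    s.sup f = 0 ↔ ∀ a ∈ s, f a = 0 := by
  constructor
  · intro h a ha
    exact le_antisymm (h ▸ Finset.le_sup ha) (fin3_bot _)
  · intro h
    exact le_antisymm (Finset.sup_le fun a ha => le_of_eq (h a ha)) (fin3_bot _)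

private lemma inf_eq_zero {β : Type} (s : Finset β) (f : β → Fin 3) :
    s.inf f = 0 ↔ ∃ a ∈ s, f a = 0 := by
  constructor
  · intro h
    by_contra hc
    push_neg at hc
    have h1 : 1 ≤ s.inf f := Finset.le_inf fun a ha => fin3_ne0_le _ (hc a ha)
    rw [h] at h1
    exact absurd h1 (by decide)
  · rintro ⟨a, ha, hfa⟩
    exact le_antisymm (hfa ▸ Finset.inf_le ha) (fin3_bot _)

private lemma sup_mem02 {β : Type} {s : Finset β} {f : β → Fin 3}
    (h : ∀ a ∈ s, f a = 0 ∨ f a = 2) : s.sup f = 0 ∨ s.sup f = 2 := by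
  by_cases hc : ∃ a ∈ s, f a = 2
  · exact Or.inr ((sup_eq_two s f).2 hc)
  · push_neg at hc
    exact Or.inl ((sup_eq_zero s f).2 fun a ha => (h a ha).resolve_right (hc a ha))

private lemma inf_mem02 {β : Type} {s : Finset β} {f : β → Fin 3}
    (h : ∀ a ∈ s, f a = 0 ∨ f a = 2) : s.inf f = 0 ∨ s.inf f = 2 := by
  by_cases hc : ∃ a ∈ s, f a = 0
  · exact Or.inl ((inf_eq_zero s f).2 hc)
  · push_neg at hc
    exact Or.inr ((inf_eq_two s f).2 fun a ha => (h a ha).resolve_left (hc a ha))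

end Fin3Facts

section ValFacts

variable {α : Type}

/-- The `there'' valuation only takes values `0` and `2`. -/
private lemma valTT_mem (T : ℕ → Set α) (n : ℕ) (φ : TForm α) :
    ∀ k, val T T n k φ = 0 ∨ val T T n k φ = 2 := by
  induction φ with
  | bot => intro k; left; simp [val]
  | atom a =>
    intro k
    simp only [val]
    by_cases h : a ∈ T k
    · right; rw [if_pos h]
    · left; rw [if_neg h, if_neg h]
  | conj φ ψ ihφ ihψ =>
    intro k
    simp only [val]
    rcases ihφ k with h | h <;> rcases ihψ k with h' | h' <;> rw [h, h'] <;> decide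
  | disj φ ψ ihφ ihψ =>
    intro k
    simp only [val]
    rcases ihφ k with h | h <;> rcases ihψ k with h' | h' <;> rw [h, h'] <;> decide
  | impl φ ψ ihφ ihψ =>
    intro k
    simp only [val]
    by_cases h : val T T n k φ ≤ val T T n k ψ
    · rw [if_pos h]; right; rfl
    · rw [if_neg h]; exact ihψ k
  | prev φ ihφ =>
    intro k
    simp only [val]
    by_cases h : k = 0
    · rw [if_pos h]; left; rfl
    · rw [if_neg h]; exact ihφ (k-1)
  | next φ ihφ =>
    intro k
    simp only [val]
    by_cases h : k + 1 = n
    · rw [if_pos h]; left; rfl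
    · rw [if_neg h]; exact ihφ (k+1)
  | since φ ψ ihφ ihψ =>
    intro k
    simp only [val]
    apply sup_mem02
    intro j _
    have h2 := inf_mem02 (s := Finset.Ioc j k) (f := fun i => val T T n i φ)
      (fun i _ => ihφ i)
    rcases ihψ j with h | h <;> rcases h2 with h' | h' <;> rw [h, h'] <;> decide
  | trig φ ψ ihφ ihψ =>
    intro k
    simp only [val]
    apply inf_mem02
    intro j _
    have h2 := sup_mem02 (s := Finset.Ioc j k) (f := fun i => val T T n i φ)
      (fun i _ => ihφ i)
    rcases ihψ j with h | h <;> rcases h2 with h' | h' <;> rw [h, h'] <;> decide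
  | untl φ ψ ihφ ihψ =>
    intro k
    simp only [val]
    apply sup_mem02
    intro j _
    have h2 := inf_mem02 (s := Finset.Ico k j) (f := fun i => val T T n i φ)
      (fun i _ => ihφ i)
    rcases ihψ j with h | h <;> rcases h2 with h' | h' <;> rw [h, h'] <;> decide
  | rels φ ψ ihφ ihψ =>
    intro k
    simp only [val]
    apply inf_mem02
    intro j _
    have h2 := sup_mem02 (s := Finset.Ico k j) (f := fun i => val T T n i φ)
      (fun i _ => ihφ i)
    rcases ihψ j with h | h <;> rcases h2 with h' | h' <;> rw [h, h'] <;> decide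

/-- The `here'' valuation is `0` exactly when the `there'' valuation is. -/
private lemma val_zero_iff {H T : ℕ → Set α} {n : ℕ}
    (hHT : ∀ i, i < n → H i ⊆ T i) (φ : TForm α) :
    ∀ k, k < n → (val H T n k φ = 0 ↔ val T T n k φ = 0) := by
  induction φ with
  | bot => intro k hk; simp [val]
  | atom a =>
    intro k hk
    simp only [val]
    by_cases hH : a ∈ H k
    · rw [if_pos hH, if_pos (hHT k hk hH)]
    · rw [if_neg hH]
      by_cases hT : a ∈ T k
      · rw [if_pos hT, if_pos hT]; decide
      · rw [if_neg hT, if_neg hT]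
  | conj φ ψ ihφ ihψ =>
    intro k hk
    simp only [val]
    rw [fin3_min0, fin3_min0, ihφ k hk, ihψ k hk]
  | disj φ ψ ihφ ihψ =>
    intro k hk
    simp only [val]
    rw [fin3_max0, fin3_max0, ihφ k hk, ihψ k hk]
  | impl φ ψ ihφ ihψ =>
    intro k hk
    simp only [val]
    rw [ite_val0, ite_val0, fin3_nle0, fin3_nle0]
    simp only [ihφ k hk, ihψ k hk]
  | prev φ ihφ =>
    intro k hk
    simp only [val]
    by_cases h : k = 0
    · rw [if_pos h, if_pos h]
    · rw [if_neg h, if_neg h]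
      exact ihφ (k-1) (by omega)
  | next φ ihφ =>
    intro k hk
    simp only [val]
    by_cases h : k + 1 = n
    · rw [if_pos h, if_pos h]
    · rw [if_neg h, if_neg h]
      exact ihφ (k+1) (by omega)
  | since φ ψ ihφ ihψ =>
    intro k hk
    simp only [val]
    rw [sup_eq_zero, sup_eq_zero]
    constructor
    · intro h j hj
      have hj' : j < k + 1 := Finset.mem_range.1 hj
      have hh := h j hj
      rw [fin3_min0, inf_eq_zero] at hh ⊢
      rcases hh with h1 | ⟨i, hi, h1⟩
      · exact Or.inl ((ihψ j (by omega)).1 h1)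
      · have hi' := Finset.mem_Ioc.1 hi
        exact Or.inr ⟨i, hi, (ihφ i (by omega)).1 h1⟩
    · intro h j hj
      have hj' : j < k + 1 := Finset.mem_range.1 hj
      have hh := h j hj
      rw [fin3_min0, inf_eq_zero] at hh ⊢
      rcases hh with h1 | ⟨i, hi, h1⟩
      · exact Or.inl ((ihψ j (by omega)).2 h1)
      · have hi' := Finset.mem_Ioc.1 hi
        exact Or.inr ⟨i, hi, (ihφ i (by omega)).2 h1⟩
  | trig φ ψ ihφ ihψ =>
    intro k hk
    simp only [val]
    rw [inf_eq_zero, inf_eq_zero]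
    constructor
    · rintro ⟨j, hj, hm⟩
      have hj' : j < k + 1 := Finset.mem_range.1 hj
      rw [fin3_max0, sup_eq_zero] at hm
      refine ⟨j, hj, ?_⟩
      rw [fin3_max0, sup_eq_zero]
      exact ⟨(ihψ j (by omega)).1 hm.1,
        fun i hi => (ihφ i (by have := Finset.mem_Ioc.1 hi; omega)).1 (hm.2 i hi)⟩
    · rintro ⟨j, hj, hm⟩
      have hj' : j < k + 1 := Finset.mem_range.1 hj
      rw [fin3_max0, sup_eq_zero] at hm
      refine ⟨j, hj, ?_⟩
      rw [fin3_max0, sup_eq_zero]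
      exact ⟨(ihψ j (by omega)).2 hm.1,
        fun i hi => (ihφ i (by have := Finset.mem_Ioc.1 hi; omega)).2 (hm.2 i hi)⟩
  | untl φ ψ ihφ ihψ =>
    intro k hk
    simp only [val]
    rw [sup_eq_zero, sup_eq_zero]
    constructor
    · intro h j hj
      have hj' := Finset.mem_Ico.1 hj
      have hh := h j hj
      rw [fin3_min0, inf_eq_zero] at hh ⊢
      rcases hh with h1 | ⟨i, hi, h1⟩
      · exact Or.inl ((ihψ j (by omega)).1 h1)
      · have hi' := Finset.mem_Ico.1 hi
        exact Or.inr ⟨i, hi, (ihφ i (by omega)).1 h1⟩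
    · intro h j hj
      have hj' := Finset.mem_Ico.1 hj
      have hh := h j hj
      rw [fin3_min0, inf_eq_zero] at hh ⊢
      rcases hh with h1 | ⟨i, hi, h1⟩
      · exact Or.inl ((ihψ j (by omega)).2 h1)
      · have hi' := Finset.mem_Ico.1 hi
        exact Or.inr ⟨i, hi, (ihφ i (by omega)).2 h1⟩
  | rels φ ψ ihφ ihψ =>
    intro k hk
    simp only [val]
    rw [inf_eq_zero, inf_eq_zero]
    constructor
    · rintro ⟨j, hj, hm⟩
      have hj' := Finset.mem_Ico.1 hj
      rw [fin3_max0, sup_eq_zero] at hm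
      refine ⟨j, hj, ?_⟩
      rw [fin3_max0, sup_eq_zero]
      exact ⟨(ihψ j (by omega)).1 hm.1,
        fun i hi => (ihφ i (by have := Finset.mem_Ico.1 hi; omega)).1 (hm.2 i hi)⟩
    · rintro ⟨j, hj, hm⟩
      have hj' := Finset.mem_Ico.1 hj
      rw [fin3_max0, sup_eq_zero] at hm
      refine ⟨j, hj, ?_⟩
      rw [fin3_max0, sup_eq_zero]
      exact ⟨(ihψ j (by omega)).2 hm.1,
        fun i hi => (ihφ i (by have := Finset.mem_Ico.1 hi; omega)).2 (hm.2 i hi)⟩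

/-- Satisfaction corresponds to the valuation being `2`. -/
private lemma sat_iff_val {n : ℕ} (φ : TForm α) :
    ∀ (H T : ℕ → Set α), (∀ i, i < n → H i ⊆ T i) → ∀ k, k < n →
      (sat n H T k φ ↔ val H T n k φ = 2) := by
  induction φ with
  | bot =>
    intro H T hHT k hk
    simp only [sat, val]
    simp [(by decide : ¬ (0:Fin 3) = 2)]
  | atom a =>
    intro H T hHT k hk
    simp only [sat, val]
    by_cases hH : a ∈ H k
    · rw [if_pos hH]; simp [hH]
    · rw [if_neg hH]
      by_cases hT : a ∈ T k
      · rw [if_pos hT]; simp [hH, (by decide : ¬ (1:Fin 3) = 2)]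
      · rw [if_neg hT]; simp [hH, (by decide : ¬ (0:Fin 3) = 2)]
  | conj φ ψ ihφ ihψ =>
    intro H T hHT k hk
    simp only [sat, val]
    rw [ihφ H T hHT k hk, ihψ H T hHT k hk, fin3_min2]
  | disj φ ψ ihφ ihψ =>
    intro H T hHT k hk
    simp only [sat, val]
    rw [ihφ H T hHT k hk, ihψ H T hHT k hk, fin3_max2]
  | impl φ ψ ihφ ihψ =>
    intro H T hHT k hk
    have eφ : val T T n k φ = 2 ↔ ¬ val H T n k φ = 0 := by
      rw [val_zero_iff hHT φ k hk]
      rcases valTT_mem T n φ k with h | h <;> rw [h] <;> decide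
    have eψ : val T T n k ψ = 2 ↔ ¬ val H T n k ψ = 0 := by
      rw [val_zero_iff hHT ψ k hk]
      rcases valTT_mem T n ψ k with h | h <;> rw [h] <;> decide
    simp only [sat, val]
    rw [ihφ H T hHT k hk, ihψ H T hHT k hk,
      ihφ T T (fun _ _ => subset_rfl) k hk, ihψ T T (fun _ _ => subset_rfl) k hk,
      eφ, eψ, ite_val2]
    exact fin3_implB _ _
  | prev φ ihφ =>
    intro H T hHT k hk
    simp only [sat, val]
    by_cases h0 : k = 0
    · rw [if_pos h0]
      subst h0
      simp [(by decide : ¬ (0:Fin 3) = 2)]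
    · rw [if_neg h0, ← ihφ H T hHT (k-1) (by omega)]
      simp [Nat.pos_of_ne_zero h0]
  | next φ ihφ =>
    intro H T hHT k hk
    simp only [sat, val]
    by_cases h0 : k + 1 = n
    · rw [if_pos h0]
      simp [h0, (by decide : ¬ (0:Fin 3) = 2)]
    · rw [if_neg h0, ← ihφ H T hHT (k+1) (by omega)]
      simp [show k + 1 < n by omega]
  | since φ ψ ihφ ihψ =>
    intro H T hHT k hk
    simp only [sat, val]
    rw [sup_eq_two]
    constructor
    · rintro ⟨j, hjk, hsψ, hsφ⟩
      refine ⟨j, Finset.mem_range.2 (by omega), ?_⟩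
      rw [fin3_min2]
      refine ⟨(ihψ H T hHT j (by omega)).1 hsψ, ?_⟩
      rw [inf_eq_two]
      intro i hi
      have hi' := Finset.mem_Ioc.1 hi
      exact (ihφ H T hHT i (by omega)).1 (hsφ i hi'.1 hi'.2)
    · rintro ⟨j, hj, hm⟩
      have hjk : j < k + 1 := Finset.mem_range.1 hj
      rw [fin3_min2, inf_eq_two] at hm
      exact ⟨j, by omega, (ihψ H T hHT j (by omega)).2 hm.1,
        fun i h1 h2 => (ihφ H T hHT i (by omega)).2 (hm.2 i (Finset.mem_Ioc.2 ⟨h1, h2⟩))⟩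
  | trig φ ψ ihφ ihψ =>
    intro H T hHT k hk
    simp only [sat, val]
    rw [inf_eq_two]
    constructor
    · intro h j hj
      have hjk : j < k + 1 := Finset.mem_range.1 hj
      rw [fin3_max2]
      rcases h j (by omega) with hs | ⟨i, h1, h2, hs⟩
      · exact Or.inl ((ihψ H T hHT j (by omega)).1 hs)
      · refine Or.inr ?_
        rw [sup_eq_two]
        exact ⟨i, Finset.mem_Ioc.2 ⟨h1, h2⟩, (ihφ H T hHT i (by omega)).1 hs⟩
    · intro h j hj
      have hh := h j (Finset.mem_range.2 (by omega))
      rw [fin3_max2] at hh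
      rcases hh with hs | hs
      · exact Or.inl ((ihψ H T hHT j (by omega)).2 hs)
      · rw [sup_eq_two] at hs
        obtain ⟨i, hi, hs⟩ := hs
        have hi' := Finset.mem_Ioc.1 hi
        exact Or.inr ⟨i, hi'.1, hi'.2, (ihφ H T hHT i (by omega)).2 hs⟩
  | untl φ ψ ihφ ihψ =>
    intro H T hHT k hk
    simp only [sat, val]
    rw [sup_eq_two]
    constructor
    · rintro ⟨j, h1, h2, hsψ, hsφ⟩
      refine ⟨j, Finset.mem_Ico.2 ⟨h1, h2⟩, ?_⟩
      rw [fin3_min2]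
      refine ⟨(ihψ H T hHT j h2).1 hsψ, ?_⟩
      rw [inf_eq_two]
      intro i hi
      have hi' := Finset.mem_Ico.1 hi
      exact (ihφ H T hHT i (by omega)).1 (hsφ i hi'.1 hi'.2)
    · rintro ⟨j, hj, hm⟩
      have hj' := Finset.mem_Ico.1 hj
      rw [fin3_min2, inf_eq_two] at hm
      exact ⟨j, hj'.1, hj'.2, (ihψ H T hHT j hj'.2).2 hm.1,
        fun i ha hb => (ihφ H T hHT i (by omega)).2 (hm.2 i (Finset.mem_Ico.2 ⟨ha, hb⟩))⟩
  | rels φ ψ ihφ ihψ =>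
    intro H T hHT k hk
    simp only [sat, val]
    rw [inf_eq_two]
    constructor
    · intro h j hj
      have hj' := Finset.mem_Ico.1 hj
      rw [fin3_max2]
      rcases h j hj'.1 hj'.2 with hs | ⟨i, h1, h2, hs⟩
      · exact Or.inl ((ihψ H T hHT j (by omega)).1 hs)
      · refine Or.inr ?_
        rw [sup_eq_two]
        exact ⟨i, Finset.mem_Ico.2 ⟨h1, h2⟩, (ihφ H T hHT i (by omega)).1 hs⟩
    · intro h j hj1 hj2
      have hh := h j (Finset.mem_Ico.2 ⟨hj1, hj2⟩)
      rw [fin3_max2] at hh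
      rcases hh with hs | hs
      · exact Or.inl ((ihψ H T hHT j (by omega)).2 hs)
      · rw [sup_eq_two] at hs
        obtain ⟨i, hi, hs⟩ := hs
        have hi' := Finset.mem_Ico.1 hi
        exact Or.inr ⟨i, hi'.1, hi'.2, (ihφ H T hHT i (by omega)).2 hs⟩

end ValFacts
section RecFacts

variable {α : Type} {H T : ℕ → Set α} {n : ℕ}

private lemma ioc_insert {j m : ℕ} (h : j ≤ m) :
    Finset.Ioc j (m+1) = insert (m+1) (Finset.Ioc j m) := by
  ext x
  simp only [Finset.mem_Ioc, Finset.mem_insert]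
  omega

private lemma val_since_zero (φ ψ : TForm α) :
    val H T n 0 (.since φ ψ) = val H T n 0 ψ := by
  conv_lhs => simp only [val]
  rw [Finset.range_one, Finset.sup_singleton, Finset.Ioc_self, Finset.inf_empty, fin3_min_top]

private lemma val_trig_zero (φ ψ : TForm α) :
    val H T n 0 (.trig φ ψ) = val H T n 0 ψ := by
  conv_lhs => simp only [val]
  rw [Finset.range_one, Finset.inf_singleton, Finset.Ioc_self, Finset.sup_empty, fin3_max_bot]

private lemma val_since_succ (m : ℕ) (φ ψ : TForm α) :
    val H T n (m+1) (.since φ ψ)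
      = max (val H T n (m+1) ψ)
          (min (val H T n (m+1) φ) (val H T n m (.since φ ψ))) := by
  conv_lhs => simp only [val]
  conv_rhs => simp only [val]
  rw [show Finset.range (m+1+1) = insert (m+1) (Finset.range (m+1)) from Finset.range_add_one]
  rw [Finset.sup_insert, Finset.Ioc_self, Finset.inf_empty, fin3_min_top]
  congr 1
  rw [Finset.sup_inf_distrib_left]
  refine Finset.sup_congr rfl fun j hj => ?_
  have hj' : j ≤ m := by have := Finset.mem_range.1 hj; omega
  rw [ioc_insert hj', Finset.inf_insert]
  exact inf_left_comm _ _ _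

private lemma val_trig_succ (m : ℕ) (φ ψ : TForm α) :
    val H T n (m+1) (.trig φ ψ)
      = min (val H T n (m+1) ψ)
          (max (val H T n (m+1) φ) (val H T n m (.trig φ ψ))) := by
  conv_lhs => simp only [val]
  conv_rhs => simp only [val]
  rw [show Finset.range (m+1+1) = insert (m+1) (Finset.range (m+1)) from Finset.range_add_one]
  rw [Finset.inf_insert, Finset.Ioc_self, Finset.sup_empty, fin3_max_bot]
  congr 1
  rw [Finset.inf_sup_distrib_left]
  refine Finset.inf_congr rfl fun j hj => ?_
  have hj' : j ≤ m := by have := Finset.mem_range.1 hj; omega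
  rw [ioc_insert hj', Finset.sup_insert]
  exact sup_left_comm _ _ _

private lemma val_untl_succ {k : ℕ} (hk : k < n) (φ ψ : TForm α) :
    val H T n k (.untl φ ψ)
      = max (val H T n k ψ)
          (min (val H T n k φ) (val H T n (k+1) (.untl φ ψ))) := by
  conv_lhs => simp only [val]
  conv_rhs => simp only [val]
  rw [show Finset.Ico k n = insert k (Finset.Ico (k+1) n) from
    (Finset.insert_Ico_add_one_left_eq_Ico hk).symm]
  rw [Finset.sup_insert, Finset.Ico_self, Finset.inf_empty, fin3_min_top]
  congr 1
  rw [Finset.sup_inf_distrib_left]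
  refine Finset.sup_congr rfl fun j hj => ?_
  have hj' : k < j := by have := Finset.mem_Ico.1 hj; omega
  rw [show Finset.Ico k j = insert k (Finset.Ico (k+1) j) from
    (Finset.insert_Ico_add_one_left_eq_Ico hj').symm, Finset.inf_insert]
  exact inf_left_comm _ _ _

private lemma val_rels_succ {k : ℕ} (hk : k < n) (φ ψ : TForm α) :
    val H T n k (.rels φ ψ)
      = min (val H T n k ψ)
          (max (val H T n k φ) (val H T n (k+1) (.rels φ ψ))) := by
  conv_lhs => simp only [val]
  conv_rhs => simp only [val]
  rw [show Finset.Ico k n = insert k (Finset.Ico (k+1) n) from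
    (Finset.insert_Ico_add_one_left_eq_Ico hk).symm]
  rw [Finset.inf_insert, Finset.Ico_self, Finset.sup_empty, fin3_max_bot]
  congr 1
  rw [Finset.inf_sup_distrib_left]
  refine Finset.inf_congr rfl fun j hj => ?_
  have hj' : k < j := by have := Finset.mem_Ico.1 hj; omega
  rw [show Finset.Ico k j = insert k (Finset.Ico (k+1) j) from
    (Finset.insert_Ico_add_one_left_eq_Ico hj').symm, Finset.sup_insert]
  exact sup_left_comm _ _ _

private lemma val_untl_last {k : ℕ} (h : k + 1 = n) (φ ψ : TForm α) :
    val H T n k (.untl φ ψ) = val H T n k ψ := by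
  conv_lhs => simp only [val]
  rw [show Finset.Ico k n = {k} from by rw [← h]; exact Nat.Ico_succ_singleton k]
  rw [Finset.sup_singleton, Finset.Ico_self, Finset.inf_empty, fin3_min_top]

private lemma val_rels_last {k : ℕ} (h : k + 1 = n) (φ ψ : TForm α) :
    val H T n k (.rels φ ψ) = val H T n k ψ := by
  conv_lhs => simp only [val]
  rw [show Finset.Ico k n = {k} from by rw [← h]; exact Nat.Ico_succ_singleton k]
  rw [Finset.inf_singleton, Finset.Ico_self, Finset.sup_empty, fin3_max_bot]

end RecFacts

section SatFacts

variable {α : Type} {H T : ℕ → Set α} {n : ℕ}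

private lemma val_impl_eq_two (k : ℕ) (A B : TForm α) :
    val H T n k (.impl A B) = 2 ↔ val H T n k A ≤ val H T n k B := by
  simp only [val]
  rw [ite_val2, fin3_or2]

private lemma val_tneg_eq_two (k : ℕ) (A : TForm α) :
    val H T n k (tneg A) = 2 ↔ val H T n k A = 0 := by
  simp only [tneg]
  rw [val_impl_eq_two]
  simp only [val]
  exact fin3_le0 _

private lemma val_tiff_eq_two (k : ℕ) (A B : TForm α) :
    val H T n k (tiff A B) = 2 ↔ val H T n k A = val H T n k B := by
  simp only [tiff, val]
  rw [fin3_min2, ite_val2, ite_val2, fin3_or2, fin3_or2]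
  constructor
  · rintro ⟨h1, h2⟩; exact le_antisymm h1 h2
  · rintro h; exact ⟨le_of_eq h, le_of_eq h.symm⟩

private lemma sat_tiff_iff (hHT : ∀ i, i < n → H i ⊆ T i) {k : ℕ} (hk : k < n)
    (A B : TForm α) :
    sat n H T k (tiff A B) ↔ val H T n k A = val H T n k B := by
  rw [sat_iff_val _ H T hHT k hk, val_tiff_eq_two]

private lemma sat_talways (ξ : TForm α) :
    sat n H T 0 (talways ξ) ↔ ∀ j, j < n → sat n H T j ξ := by
  simp only [talways, sat]
  constructor
  · intro h j hj
    rcases h j (Nat.zero_le j) hj with h1 | ⟨i, _, _, hF⟩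
    · exact h1
    · exact hF.elim
  · exact fun h j _ hj => Or.inl (h j hj)

private lemma sat_twnext_talways (ξ : TForm α) :
    sat n H T 0 (twnext (talways ξ)) ↔ ∀ j, 1 ≤ j → j < n → sat n H T j ξ := by
  simp only [twnext, tneg, ttop, talways, sat]
  constructor
  · rintro (⟨h1, _⟩ | ⟨_, h2⟩) j hj1 hj2
    · exact (h1 ⟨by omega, fun x => x, fun x => x⟩).elim
    · rcases h2 j hj1 hj2 with h | ⟨i, _, _, hF⟩
      · exact h
      · exact hF.elim
  · intro h
    by_cases hn : 0 + 1 < n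
    · exact Or.inr ⟨hn, fun j h1 h2 => Or.inl (h j h1 h2)⟩
    · exact Or.inl ⟨fun hc => hn hc.1, fun hc => hn hc.1⟩

private lemma sat_end_impl (hHT : ∀ i, i < n → H i ⊆ T i) {k : ℕ} (hk : k < n)
    (X : TForm α) :
    sat n H T k (.impl (tneg (.next ttop)) X) ↔ (k + 1 = n → val H T n k X = 2) := by
  rw [sat_iff_val _ H T hHT k hk, val_impl_eq_two]
  have hA : val H T n k (tneg (.next ttop)) = if k + 1 = n then 2 else 0 := by
    simp only [tneg, ttop, val]
    by_cases h : k + 1 = n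
    · simp [h]
    · simp [h]
  rw [hA]
  by_cases h : k + 1 = n
  · rw [if_pos h]
    constructor
    · intro h2 _; exact le_antisymm (fin3_top _) h2
    · intro h2; exact le_of_eq (h2 h).symm
  · rw [if_neg h]
    constructor
    · intro _ hc; exact absurd hc h
    · intro _; exact fin3_bot _

end SatFacts

section SubfFacts

variable {α : Type}

private lemma self_mem_subf (φ : TForm α) : φ ∈ subf φ := by
  cases φ <;> simp [subf]

private lemma subf_trans {ν μ : TForm α} (γ : TForm α) (h1 : ν ∈ subf μ) :
    μ ∈ subf γ → ν ∈ subf γ := by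
  induction γ with
  | bot => intro h; simp only [subf, Set.mem_singleton_iff] at h; subst h; exact h1
  | atom a => intro h; simp only [subf, Set.mem_singleton_iff] at h; subst h; exact h1
  | conj φ ψ ihφ ihψ =>
    intro h
    simp only [subf, Set.mem_insert_iff, Set.mem_union] at h ⊢
    rcases h with rfl | h | h
    · simpa only [subf, Set.mem_insert_iff, Set.mem_union] using h1
    · exact Or.inr (Or.inl (ihφ h))
    · exact Or.inr (Or.inr (ihψ h))
  | disj φ ψ ihφ ihψ =>
    intro h
    simp only [subf, Set.mem_insert_iff, Set.mem_union] at h ⊢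
    rcases h with rfl | h | h
    · simpa only [subf, Set.mem_insert_iff, Set.mem_union] using h1
    · exact Or.inr (Or.inl (ihφ h))
    · exact Or.inr (Or.inr (ihψ h))
  | impl φ ψ ihφ ihψ =>
    intro h
    simp only [subf, Set.mem_insert_iff, Set.mem_union] at h ⊢
    rcases h with rfl | h | h
    · simpa only [subf, Set.mem_insert_iff, Set.mem_union] using h1
    · exact Or.inr (Or.inl (ihφ h))
    · exact Or.inr (Or.inr (ihψ h))
  | prev φ ihφ =>
    intro h
    simp only [subf, Set.mem_insert_iff] at h ⊢
    rcases h with rfl | h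
    · simpa only [subf, Set.mem_insert_iff] using h1
    · exact Or.inr (ihφ h)
  | since φ ψ ihφ ihψ =>
    intro h
    simp only [subf, Set.mem_insert_iff, Set.mem_union] at h ⊢
    rcases h with rfl | h | h
    · simpa only [subf, Set.mem_insert_iff, Set.mem_union] using h1
    · exact Or.inr (Or.inl (ihφ h))
    · exact Or.inr (Or.inr (ihψ h))
  | trig φ ψ ihφ ihψ =>
    intro h
    simp only [subf, Set.mem_insert_iff, Set.mem_union] at h ⊢
    rcases h with rfl | h | h
    · simpa only [subf, Set.mem_insert_iff, Set.mem_union] using h1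
    · exact Or.inr (Or.inl (ihφ h))
    · exact Or.inr (Or.inr (ihψ h))
  | next φ ihφ =>
    intro h
    simp only [subf, Set.mem_insert_iff] at h ⊢
    rcases h with rfl | h
    · simpa only [subf, Set.mem_insert_iff] using h1
    · exact Or.inr (ihφ h)
  | untl φ ψ ihφ ihψ =>
    intro h
    simp only [subf, Set.mem_insert_iff, Set.mem_union] at h ⊢
    rcases h with rfl | h | h
    · simpa only [subf, Set.mem_insert_iff, Set.mem_union] using h1
    · exact Or.inr (Or.inl (ihφ h))
    · exact Or.inr (Or.inr (ihψ h))
  | rels φ ψ ihφ ihψ =>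
    intro h
    simp only [subf, Set.mem_insert_iff, Set.mem_union] at h ⊢
    rcases h with rfl | h | h
    · simpa only [subf, Set.mem_insert_iff, Set.mem_union] using h1
    · exact Or.inr (Or.inl (ihφ h))
    · exact Or.inr (Or.inr (ihψ h))

private lemma subfTh_closed {Γ : Set (TForm α)} {μ ν : TForm α}
    (hμ : μ ∈ subfTh Γ) (hν : ν ∈ subf μ) : ν ∈ subfTh Γ := by
  simp only [subfTh, Set.mem_iUnion, exists_prop] at hμ ⊢
  obtain ⟨γ, hγ, hm⟩ := hμ
  exact ⟨γ, hγ, subf_trans γ hν hm⟩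

private lemma labInl (μ : TForm α) (a : α) (h : lab μ = TForm.atom (Sum.inl a)) :
    μ = TForm.atom a := by
  cases μ <;> simp_all [lab]

private lemma labInr (μ ν : TForm α) (h : lab μ = TForm.atom (Sum.inr ν)) : μ = ν := by
  cases μ <;> simp_all [lab]

private lemma val_label {H T : ℕ → Set α} {H' T' : ℕ → Set (ExtAlph α)} {n k : ℕ}
    {μ : TForm α} (hl : lab μ = TForm.atom (Sum.inr μ))
    (hHm : Sum.inr μ ∈ H' k ↔ val H T n k μ = 2)
    (hTm : Sum.inr μ ∈ T' k ↔ val H T n k μ ≠ 0) :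
    val H' T' n k (lab μ) = val H T n k μ := by
  rw [hl]
  simp only [val]
  by_cases h2 : val H T n k μ = 2
  · rw [if_pos (hHm.2 h2), h2]
  · rw [if_neg (fun hc => h2 (hHm.1 hc))]
    by_cases h0 : val H T n k μ = 0
    · rw [if_neg (fun hc => (hTm.1 hc) h0), h0]
    · rw [if_pos (hTm.2 h0)]
      rcases fin3_dec (val H T n k μ) with h | h | h
      · exact absurd h h0
      · exact h.symm
      · exact absurd h h2

end SubfFacts

section ValUnfold

variable {α : Type} {H T : ℕ → Set α} {n k : ℕ} {A B : TForm α}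

private lemma val_conj_eq :
    val H T n k (.conj A B) = min (val H T n k A) (val H T n k B) := by simp only [val]

private lemma val_disj_eq :
    val H T n k (.disj A B) = max (val H T n k A) (val H T n k B) := by simp only [val]

open Classical in
private lemma val_impl_eqn :
    val H T n k (.impl A B)
      = if val H T n k A ≤ val H T n k B then 2 else val H T n k B := by simp only [val]

private lemma val_prev_eq :
    val H T n k (.prev A) = if k = 0 then 0 else val H T n (k-1) A := by simp only [val]

private lemma val_next_eq :
    val H T n k (.next A) = if k + 1 = n then 0 else val H T n (k+1) A := by simp only [val]

end ValUnfold
/-- Lemma nf1: Let `⟨H,T⟩` be a THT_f model of length `n` of a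
temporal theory `Γ` over `α`, with associated valuation `m = val H T n`.
Define `H'_k = H_k ∪ {L_μ | μ ∈ subf(Γ), m[k,μ] = 2}` and
`T'_k = T_k ∪ {L_μ | μ ∈ subf(Γ), m[k,μ] ≠ 0}` over the extended alphabet.
Then `⟨H',T'⟩|_𝒜 = ⟨H,T⟩`, `⟨H',T'⟩` is an HT-trace, its valuation `m'`
satisfies `m'[k,L_μ] = m[k,μ]` for all `μ ∈ subf(Γ)` and `k < n`, and
`⟨H',T'⟩ ⊨ σ(Γ)`. -/
theorem nf1 {α : Type} (Γ : Set (TForm α)) (H T : ℕ → Set α) (n : ℕ)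
    (hlen : 0 < n) (hHT : ∀ i, i < n → H i ⊆ T i)
    (hmod : ∀ φ ∈ Γ, sat n H T 0 φ)
    (H' T' : ℕ → Set (ExtAlph α))
    (hH' : ∀ k, H' k = (Sum.inl '' H k) ∪
        {x | ∃ μ ∈ subfTh Γ, lab μ = TForm.atom x ∧ val H T n k μ = 2})
    (hT' : ∀ k, T' k = (Sum.inl '' T k) ∪
        {x | ∃ μ ∈ subfTh Γ, lab μ = TForm.atom x ∧ val H T n k μ ≠ 0}) :
    (∀ k, k < n → restrict H' k = H k ∧ restrict T' k = T k) ∧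
    (∀ i, i < n → H' i ⊆ T' i) ∧
    (∀ μ ∈ subfTh Γ, ∀ k, k < n → val H' T' n k (lab μ) = val H T n k μ) ∧
    (∀ δ ∈ sigmaT Γ, sat n H' T' 0 δ) := by
  -- membership characterizations
  have memH'inl : ∀ k (a : α), Sum.inl a ∈ H' k ↔ a ∈ H k := by
    intro k a
    rw [hH' k]
    simp only [Set.mem_union, Set.mem_image, Set.mem_setOf_eq]
    constructor
    · rintro (⟨b, hb, hba⟩ | ⟨ν, hν, hlν, hv⟩)
      · obtain rfl : b = a := Sum.inl.inj hba
        exact hb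
      · obtain rfl : ν = TForm.atom a := labInl ν a hlν
        simp only [val] at hv
        by_cases hHm : a ∈ H k
        · exact hHm
        · rw [if_neg hHm] at hv
          by_cases hTm : a ∈ T k
          · rw [if_pos hTm] at hv; exact absurd hv (by decide)
          · rw [if_neg hTm] at hv; exact absurd hv (by decide)
    · intro h; exact Or.inl ⟨a, h, rfl⟩
  have memT'inl : ∀ k, k < n → ∀ (a : α), (Sum.inl a ∈ T' k ↔ a ∈ T k) := by
    intro k hk a
    rw [hT' k]
    simp only [Set.mem_union, Set.mem_image, Set.mem_setOf_eq]
    constructor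
    · rintro (⟨b, hb, hba⟩ | ⟨ν, hν, hlν, hv⟩)
      · obtain rfl : b = a := Sum.inl.inj hba
        exact hb
      · obtain rfl : ν = TForm.atom a := labInl ν a hlν
        simp only [val] at hv
        by_cases hHm : a ∈ H k
        · exact hHT k hk hHm
        · rw [if_neg hHm] at hv
          by_cases hTm : a ∈ T k
          · exact hTm
          · rw [if_neg hTm] at hv; exact absurd rfl hv
    · intro h; exact Or.inl ⟨a, h, rfl⟩
  have memH'r : ∀ k (μ : TForm α), μ ∈ subfTh Γ → lab μ = TForm.atom (Sum.inr μ) →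
      (Sum.inr μ ∈ H' k ↔ val H T n k μ = 2) := by
    intro k μ hμ hl
    rw [hH' k]
    simp only [Set.mem_union, Set.mem_image, Set.mem_setOf_eq]
    constructor
    · rintro (⟨b, _, hb⟩ | ⟨ν, hν, hlν, hv⟩)
      · exact absurd hb (by simp)
      · rwa [labInr ν μ hlν] at hv
    · intro hv
      exact Or.inr ⟨μ, hμ, hl, hv⟩
  have memT'r : ∀ k (μ : TForm α), μ ∈ subfTh Γ → lab μ = TForm.atom (Sum.inr μ) →
      (Sum.inr μ ∈ T' k ↔ val H T n k μ ≠ 0) := by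
    intro k μ hμ hl
    rw [hT' k]
    simp only [Set.mem_union, Set.mem_image, Set.mem_setOf_eq]
    constructor
    · rintro (⟨b, _, hb⟩ | ⟨ν, hν, hlν, hv⟩)
      · exact absurd hb (by simp)
      · rwa [labInr ν μ hlν] at hv
    · intro hv
      exact Or.inr ⟨μ, hμ, hl, hv⟩
  -- ⟨H',T'⟩ is an HT-trace
  have hH'T' : ∀ i, i < n → H' i ⊆ T' i := by
    intro i hi x hx
    rw [hH' i] at hx
    rw [hT' i]
    rcases hx with ⟨b, hb, rfl⟩ | hx
    · exact Or.inl ⟨b, hHT i hi hb, rfl⟩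
    · obtain ⟨μ, hμ, hl, hv⟩ := hx
      exact Or.inr ⟨μ, hμ, hl, by rw [hv]; decide⟩
  -- the valuation of labels
  have hlab : ∀ μ ∈ subfTh Γ, ∀ k, k < n → val H' T' n k (lab μ) = val H T n k μ := by
    intro μ hμ k hk
    cases μ with
    | bot => simp [lab, val]
    | atom a =>
      show val H' T' n k (.atom (Sum.inl a)) = val H T n k (.atom a)
      simp only [val]
      by_cases hHm : a ∈ H k
      · rw [if_pos ((memH'inl k a).2 hHm), if_pos hHm]
      · rw [if_neg (fun hc => hHm ((memH'inl k a).1 hc)), if_neg hHm]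
        by_cases hTm : a ∈ T k
        · rw [if_pos ((memT'inl k hk a).2 hTm), if_pos hTm]
        · rw [if_neg (fun hc => hTm ((memT'inl k hk a).1 hc)), if_neg hTm]
    | conj φ ψ => exact val_label rfl (memH'r k _ hμ rfl) (memT'r k _ hμ rfl)
    | disj φ ψ => exact val_label rfl (memH'r k _ hμ rfl) (memT'r k _ hμ rfl)
    | impl φ ψ => exact val_label rfl (memH'r k _ hμ rfl) (memT'r k _ hμ rfl)
    | prev φ => exact val_label rfl (memH'r k _ hμ rfl) (memT'r k _ hμ rfl)
    | since φ ψ => exact val_label rfl (memH'r k _ hμ rfl) (memT'r k _ hμ rfl)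
    | trig φ ψ => exact val_label rfl (memH'r k _ hμ rfl) (memT'r k _ hμ rfl)
    | next φ => exact val_label rfl (memH'r k _ hμ rfl) (memT'r k _ hμ rfl)
    | untl φ ψ => exact val_label rfl (memH'r k _ hμ rfl) (memT'r k _ hμ rfl)
    | rels φ ψ => exact val_label rfl (memH'r k _ hμ rfl) (memT'r k _ hμ rfl)
  refine ⟨?_, hH'T', hlab, ?_⟩
  · intro k hk
    constructor
    · ext a; exact memH'inl k a
    · ext a; exact memT'inl k hk a
  · intro δ hδ
    simp only [sigmaT, Set.mem_union, Set.mem_image, Set.mem_iUnion, exists_prop] at hδ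
    rcases hδ with ⟨φ, hφ, rfl⟩ | ⟨μ, hμ, hδη⟩
    · have hφs : φ ∈ subfTh Γ := Set.mem_biUnion hφ (self_mem_subf φ)
      rw [sat_iff_val _ H' T' hH'T' 0 hlen, hlab _ hφs 0 hlen]
      exact (sat_iff_val _ H T hHT 0 hlen).1 (hmod φ hφ)
    · cases μ with
      | bot => simp [eta] at hδη
      | atom a => simp [eta] at hδη
      | conj φ ψ =>
        simp only [eta, Set.mem_singleton_iff] at hδη
        subst hδη
        have hφs : φ ∈ subfTh Γ := subfTh_closed hμ
          (Set.mem_insert_of_mem _ (Set.mem_union_left _ (self_mem_subf φ)))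
        have hψs : ψ ∈ subfTh Γ := subfTh_closed hμ
          (Set.mem_insert_of_mem _ (Set.mem_union_right _ (self_mem_subf ψ)))
        rw [sat_talways]
        intro j hj
        rw [sat_tiff_iff hH'T' hj, hlab _ hμ j hj, val_conj_eq, val_conj_eq,
          hlab _ hφs j hj, hlab _ hψs j hj]
      | disj φ ψ =>
        simp only [eta, Set.mem_singleton_iff] at hδη
        subst hδη
        have hφs : φ ∈ subfTh Γ := subfTh_closed hμ
          (Set.mem_insert_of_mem _ (Set.mem_union_left _ (self_mem_subf φ)))
        have hψs : ψ ∈ subfTh Γ := subfTh_closed hμ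
          (Set.mem_insert_of_mem _ (Set.mem_union_right _ (self_mem_subf ψ)))
        rw [sat_talways]
        intro j hj
        rw [sat_tiff_iff hH'T' hj, hlab _ hμ j hj, val_disj_eq, val_disj_eq,
          hlab _ hφs j hj, hlab _ hψs j hj]
      | impl φ ψ =>
        simp only [eta, Set.mem_singleton_iff] at hδη
        subst hδη
        have hφs : φ ∈ subfTh Γ := subfTh_closed hμ
          (Set.mem_insert_of_mem _ (Set.mem_union_left _ (self_mem_subf φ)))
        have hψs : ψ ∈ subfTh Γ := subfTh_closed hμ
          (Set.mem_insert_of_mem _ (Set.mem_union_right _ (self_mem_subf ψ)))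
        rw [sat_talways]
        intro j hj
        rw [sat_tiff_iff hH'T' hj, hlab _ hμ j hj, val_impl_eqn, val_impl_eqn,
          hlab _ hφs j hj, hlab _ hψs j hj]
      | prev φ =>
        simp only [eta, Set.mem_insert_iff, Set.mem_singleton_iff] at hδη
        have hφs : φ ∈ subfTh Γ := subfTh_closed hμ
          (Set.mem_insert_of_mem _ (self_mem_subf φ))
        rcases hδη with rfl | rfl
        · rw [sat_twnext_talways]
          intro j h1 hj
          rw [sat_tiff_iff hH'T' hj, hlab _ hμ j hj, val_prev_eq, val_prev_eq,
            if_neg (by omega : ¬ j = 0), if_neg (by omega : ¬ j = 0),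
            hlab _ hφs (j-1) (by omega)]
        · rw [sat_iff_val _ H' T' hH'T' 0 hlen, val_tneg_eq_two, hlab _ hμ 0 hlen,
            val_prev_eq, if_pos rfl]
      | since φ ψ =>
        simp only [eta, Set.mem_insert_iff, Set.mem_singleton_iff] at hδη
        have hφs : φ ∈ subfTh Γ := subfTh_closed hμ
          (Set.mem_insert_of_mem _ (Set.mem_union_left _ (self_mem_subf φ)))
        have hψs : ψ ∈ subfTh Γ := subfTh_closed hμ
          (Set.mem_insert_of_mem _ (Set.mem_union_right _ (self_mem_subf ψ)))
        rcases hδη with rfl | rfl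
        · rw [sat_twnext_talways]
          intro j h1 hj
          obtain ⟨m, rfl⟩ : ∃ m, j = m + 1 := ⟨j - 1, by omega⟩
          rw [sat_tiff_iff hH'T' hj, hlab _ hμ (m+1) hj, val_disj_eq, val_conj_eq,
            val_prev_eq, if_neg (Nat.succ_ne_zero m)]
          simp only [Nat.add_sub_cancel]
          rw [hlab _ hψs (m+1) hj, hlab _ hφs (m+1) hj, hlab _ hμ m (by omega),
            val_since_succ]
        · rw [sat_tiff_iff hH'T' hlen, hlab _ hμ 0 hlen, hlab _ hψs 0 hlen,
            val_since_zero]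
      | trig φ ψ =>
        simp only [eta, Set.mem_insert_iff, Set.mem_singleton_iff] at hδη
        have hφs : φ ∈ subfTh Γ := subfTh_closed hμ
          (Set.mem_insert_of_mem _ (Set.mem_union_left _ (self_mem_subf φ)))
        have hψs : ψ ∈ subfTh Γ := subfTh_closed hμ
          (Set.mem_insert_of_mem _ (Set.mem_union_right _ (self_mem_subf ψ)))
        rcases hδη with rfl | rfl
        · rw [sat_twnext_talways]
          intro j h1 hj
          obtain ⟨m, rfl⟩ : ∃ m, j = m + 1 := ⟨j - 1, by omega⟩
          rw [sat_tiff_iff hH'T' hj, hlab _ hμ (m+1) hj, val_conj_eq, val_disj_eq,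
            val_prev_eq, if_neg (Nat.succ_ne_zero m)]
          simp only [Nat.add_sub_cancel]
          rw [hlab _ hψs (m+1) hj, hlab _ hφs (m+1) hj, hlab _ hμ m (by omega),
            val_trig_succ]
        · rw [sat_tiff_iff hH'T' hlen, hlab _ hμ 0 hlen, hlab _ hψs 0 hlen,
            val_trig_zero]
      | next φ =>
        simp only [eta, Set.mem_insert_iff, Set.mem_singleton_iff] at hδη
        have hφs : φ ∈ subfTh Γ := subfTh_closed hμ
          (Set.mem_insert_of_mem _ (self_mem_subf φ))
        rcases hδη with rfl | rfl
        · rw [sat_twnext_talways]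
          intro j h1 hj
          obtain ⟨m, rfl⟩ : ∃ m, j = m + 1 := ⟨j - 1, by omega⟩
          rw [sat_tiff_iff hH'T' hj, val_prev_eq, if_neg (Nat.succ_ne_zero m)]
          simp only [Nat.add_sub_cancel]
          rw [hlab _ hμ m (by omega), hlab _ hφs (m+1) hj, val_next_eq,
            if_neg (by omega : ¬ m + 1 = n)]
        · rw [sat_talways]
          intro j hj
          rw [sat_end_impl hH'T' hj]
          intro hend
          rw [val_tneg_eq_two, hlab _ hμ j hj, val_next_eq, if_pos hend]
      | untl φ ψ =>
        simp only [eta, Set.mem_insert_iff, Set.mem_singleton_iff] at hδη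
        have hφs : φ ∈ subfTh Γ := subfTh_closed hμ
          (Set.mem_insert_of_mem _ (Set.mem_union_left _ (self_mem_subf φ)))
        have hψs : ψ ∈ subfTh Γ := subfTh_closed hμ
          (Set.mem_insert_of_mem _ (Set.mem_union_right _ (self_mem_subf ψ)))
        rcases hδη with rfl | rfl
        · rw [sat_twnext_talways]
          intro j h1 hj
          obtain ⟨m, rfl⟩ : ∃ m, j = m + 1 := ⟨j - 1, by omega⟩
          rw [sat_tiff_iff hH'T' hj, val_prev_eq, val_disj_eq, val_prev_eq,
            val_conj_eq, val_prev_eq, if_neg (Nat.succ_ne_zero m),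
            if_neg (Nat.succ_ne_zero m), if_neg (Nat.succ_ne_zero m)]
          simp only [Nat.add_sub_cancel]
          rw [hlab _ hμ m (by omega), hlab _ hψs m (by omega), hlab _ hφs m (by omega),
            hlab _ hμ (m+1) hj, val_untl_succ (by omega : m < n)]
        · rw [sat_talways]
          intro j hj
          rw [sat_end_impl hH'T' hj]
          intro hend
          rw [val_tiff_eq_two, hlab _ hμ j hj, hlab _ hψs j hj, val_untl_last hend]
      | rels φ ψ =>
        simp only [eta, Set.mem_insert_iff, Set.mem_singleton_iff] at hδη
        have hφs : φ ∈ subfTh Γ := subfTh_closed hμ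
          (Set.mem_insert_of_mem _ (Set.mem_union_left _ (self_mem_subf φ)))
        have hψs : ψ ∈ subfTh Γ := subfTh_closed hμ
          (Set.mem_insert_of_mem _ (Set.mem_union_right _ (self_mem_subf ψ)))
        rcases hδη with rfl | rfl
        · rw [sat_twnext_talways]
          intro j h1 hj
          obtain ⟨m, rfl⟩ : ∃ m, j = m + 1 := ⟨j - 1, by omega⟩
          rw [sat_tiff_iff hH'T' hj, val_prev_eq, val_conj_eq, val_prev_eq,
            val_disj_eq, val_prev_eq, if_neg (Nat.succ_ne_zero m),
            if_neg (Nat.succ_ne_zero m), if_neg (Nat.succ_ne_zero m)]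
          simp only [Nat.add_sub_cancel]
          rw [hlab _ hμ m (by omega), hlab _ hψs m (by omega), hlab _ hφs m (by omega),
            hlab _ hμ (m+1) hj, val_rels_succ (by omega : m < n)]
        · rw [sat_talways]
          intro j hj
          rw [sat_end_impl hH'T' hj]
          intro hend
          rw [val_tiff_eq_two, hlab _ hμ j hj, hlab _ hψs j hj, val_rels_last hend]
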